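/- arXiv:1605.02873 — 3 statements merged into one kernel-verified Lean document; each statement's English description precedes it below -/
import Mathlib

section
/- The map ρ : T(d,ℝ)_+ → GL(d,ℝ), ρ(h) = √(h_{1,1}) · h^{−T}, is a group homomorphism, and for all b ∈ ℝ^d and all h ∈ T(d,ℝ)_+ one has ρ(h)^{−T} σ_b ρ(h)^{−1} = σ_{hb}. -/
open Matrix

noncomputable section

/-- The symmetric matrix `σ_b` with `(σ_b)_{1,1} = b_1`,
`(σ_b)_{1,j} = (σ_b)_{j,1} = b_j/2` for `j ≥ 2`, and all other entries zero. -/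
def sigmaMat (d : ℕ) [NeZero d] (b : Fin d → ℝ) : Matrix (Fin d) (Fin d) ℝ :=
  Matrix.of fun i j =>
    if i = 0 ∧ j = 0 then b 0
    else if i = 0 then b j / 2
    else if j = 0 then b i / 2
    else 0

/-- `T(d,ℝ)_+`: invertible upper triangular matrices with positive `(1,1)` entry. -/
def Tplus (d : ℕ) [NeZero d] : Set (Matrix (Fin d) (Fin d) ℝ) :=
  {h | IsUnit h ∧ 0 < h 0 0 ∧ ∀ i j : Fin d, j < i → h i j = 0}

/-- The map `ρ(h) = √(h_{1,1}) · h^{-T}`. -/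
def rhoMap (d : ℕ) [NeZero d] (h : Matrix (Fin d) (Fin d) ℝ) : Matrix (Fin d) (Fin d) ℝ :=
  Real.sqrt (h 0 0) • (h⁻¹)ᵀ

private lemma fin_pos {d : ℕ} [NeZero d] {i : Fin d} (hi : i ≠ 0) : (0:Fin d) < i := by
  rcases Nat.exists_eq_succ_of_ne_zero (NeZero.ne d) with ⟨n, rfl⟩
  exact Fin.pos_of_ne_zero hi

private lemma conj_vecMulVec {d : ℕ} (A : Matrix (Fin d) (Fin d) ℝ) (u v : Fin d → ℝ) :
    A * vecMulVec u v * Aᵀ = vecMulVec (A.mulVec u) (A.mulVec v) := by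
  ext i j
  simp only [mul_apply, vecMulVec_apply, mulVec, dotProduct, transpose_apply,
    Finset.sum_mul, Finset.mul_sum]
  conv_lhs => rw [Finset.sum_comm]
  conv_rhs => rw [Finset.sum_comm]
  exact Finset.sum_congr rfl fun k _ => Finset.sum_congr rfl fun l _ => by ring

private lemma vecMulVec_smul_left {d : ℕ} (c : ℝ) (u v : Fin d → ℝ) :
    vecMulVec (c • u) v = c • vecMulVec u v := by
  ext i j; simp [vecMulVec_apply, mul_assoc]

private lemma vecMulVec_smul_right {d : ℕ} (c : ℝ) (u v : Fin d → ℝ) :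
    vecMulVec u (c • v) = c • vecMulVec u v := by
  ext i j; simp [vecMulVec_apply]; ring

private lemma sigma_eq {d : ℕ} [NeZero d] (b : Fin d → ℝ) :
    sigmaMat d b = (1/2 : ℝ) • (vecMulVec (fun i => if i = (0:Fin d) then (1:ℝ) else 0) b
      + vecMulVec b (fun j => if j = (0:Fin d) then (1:ℝ) else 0)) := by
  ext i j
  simp only [sigmaMat, of_apply, vecMulVec_apply, Matrix.smul_apply, Matrix.add_apply,
    smul_eq_mul]
  by_cases hi : i = 0 <;> by_cases hj : j = 0 <;> simp [hi, hj] <;> ring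

private lemma mulVec_e0 {d : ℕ} [NeZero d] (h : Matrix (Fin d) (Fin d) ℝ)
    (hlt : ∀ i j : Fin d, j < i → h i j = 0) :
    h.mulVec (fun j => if j = (0:Fin d) then (1:ℝ) else 0)
      = h 0 0 • (fun j => if j = (0:Fin d) then (1:ℝ) else 0) := by
  funext i
  simp only [mulVec, dotProduct, mul_ite, mul_one, mul_zero, Pi.smul_apply, smul_eq_mul]
  rw [Finset.sum_ite_eq' Finset.univ (0 : Fin d) (fun j => h i j)]
  by_cases hi : i = 0
  · simp [hi]
  · simp [hi, hlt i 0 (fin_pos hi)]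

private lemma conj_sigma {d : ℕ} [NeZero d] (h : Matrix (Fin d) (Fin d) ℝ)
    (hlt : ∀ i j : Fin d, j < i → h i j = 0) (b : Fin d → ℝ) :
    h * sigmaMat d b * hᵀ = h 0 0 • sigmaMat d (h.mulVec b) := by
  rw [sigma_eq b, sigma_eq (h.mulVec b)]
  rw [Matrix.mul_smul, Matrix.smul_mul, Matrix.mul_add, Matrix.add_mul,
    conj_vecMulVec, conj_vecMulVec, mulVec_e0 h hlt,
    vecMulVec_smul_left, vecMulVec_smul_right, ← smul_add, smul_comm]

private lemma mul_apply_00 {d : ℕ} [NeZero d] (h₁ h₂ : Matrix (Fin d) (Fin d) ℝ)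
    (hlt₂ : ∀ i j : Fin d, j < i → h₂ i j = 0) :
    (h₁ * h₂) 0 0 = h₁ 0 0 * h₂ 0 0 := by
  rw [mul_apply, Finset.sum_eq_single 0]
  · intro k _ hk
    rw [hlt₂ k 0 (fin_pos hk), mul_zero]
  · simp

/-- The map `ρ : T(d,ℝ)_+ → GL(d,ℝ)`, `ρ(h) = √(h_{1,1}) · h^{-T}`, is a
group homomorphism, and for all `b ∈ ℝ^d` and `h ∈ T(d,ℝ)_+` one has
`ρ(h)^{-T} σ_b ρ(h)^{-1} = σ_{hb}`. -/
theorem statement13 (d : ℕ) [NeZero d] :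
    (∀ h ∈ Tplus d, IsUnit (rhoMap d h)) ∧
    (∀ h₁ ∈ Tplus d, ∀ h₂ ∈ Tplus d, rhoMap d (h₁ * h₂) = rhoMap d h₁ * rhoMap d h₂) ∧
    (∀ h ∈ Tplus d, ∀ b : Fin d → ℝ,
      ((rhoMap d h)⁻¹)ᵀ * sigmaMat d b * (rhoMap d h)⁻¹ = sigmaMat d (h.mulVec b)) := by
  refine ⟨?_, ?_, ?_⟩
  · rintro h ⟨hu, hpos, hlt⟩
    have hdet : IsUnit h.det := (Matrix.isUnit_iff_isUnit_det h).mp hu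
    rw [rhoMap, Matrix.isUnit_iff_isUnit_det, Matrix.det_smul, Matrix.det_transpose,
      Matrix.det_nonsing_inv, isUnit_iff_ne_zero, Ring.inverse_eq_inv]
    have hs : (0:ℝ) < Real.sqrt (h 0 0) := Real.sqrt_pos.mpr hpos
    have hd : h.det ≠ 0 := hdet.ne_zero
    exact mul_ne_zero (by positivity) (inv_ne_zero hd)
  · rintro h₁ ⟨hu₁, hpos₁, hlt₁⟩ h₂ ⟨hu₂, hpos₂, hlt₂⟩
    rw [rhoMap, rhoMap, rhoMap, mul_apply_00 h₁ h₂ hlt₂, Real.sqrt_mul hpos₁.le,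
      Matrix.mul_inv_rev, transpose_mul, Matrix.smul_mul, Matrix.mul_smul, smul_smul]
  · rintro h ⟨hu, hpos, hlt⟩ b
    have hdet : IsUnit h.det := (Matrix.isUnit_iff_isUnit_det h).mp hu
    have hs : (0:ℝ) < Real.sqrt (h 0 0) := Real.sqrt_pos.mpr hpos
    have hinv : (rhoMap d h)⁻¹ = (Real.sqrt (h 0 0))⁻¹ • hᵀ := by
      apply Matrix.inv_eq_right_inv
      rw [rhoMap, Matrix.smul_mul, Matrix.mul_smul, smul_smul, ← transpose_mul,
        Matrix.mul_nonsing_inv h hdet, transpose_one, mul_inv_cancel₀ hs.ne', one_smul]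
    rw [hinv, transpose_smul, transpose_transpose, Matrix.smul_mul, Matrix.smul_mul,
      Matrix.mul_smul, smul_smul, conj_sigma h hlt b, smul_smul]
    have h2 : (Real.sqrt (h 0 0))⁻¹ * (Real.sqrt (h 0 0))⁻¹ * h 0 0 = 1 := by
      rw [← Real.mul_self_sqrt hpos.le]
      field_simp
      rw [Real.sqrt_sq hs.le]
    rw [h2, one_smul]

end
end

section
/- Let H be any subgroup of T(d,ℝ)_+ and let G = ℝ^d ⋊ H be the semidirect product with multiplication (b_1,h_1)(b_2,h_2) = (b_1 + h_1 b_2, h_1 h_2). Then the map φ : G → Sp(d,ℝ) defined by φ(b,h) = g(σ_b, ρ(h)) is an injective group homomorphism; in particular, G is isomorphic to the subgroup {g(σ_b, ρ(h)) : b ∈ ℝ^d, h ∈ H} of Sp(d,ℝ). -/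
open Matrix

noncomputable section

/-- The standard symplectic form matrix `J = [[0, I_d], [-I_d, 0]]`. -/
def Jmat (d : ℕ) : Matrix (Fin d ⊕ Fin d) (Fin d ⊕ Fin d) ℝ :=
  Matrix.fromBlocks 0 1 (-1) 0

/-- The block matrix `g(σ,h) = [[h, 0], [σh, h^{-T}]]`. -/
def gBlock (d : ℕ) (σ h : Matrix (Fin d) (Fin d) ℝ) :
    Matrix (Fin d ⊕ Fin d) (Fin d ⊕ Fin d) ℝ :=
  Matrix.fromBlocks h 0 (σ * h) (h⁻¹)ᵀ

/-- The map `φ(b,h) = g(σ_b, ρ(h))`. -/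
def phiMap (d : ℕ) [NeZero d] (b : Fin d → ℝ) (h : Matrix (Fin d) (Fin d) ℝ) :
    Matrix (Fin d ⊕ Fin d) (Fin d ⊕ Fin d) ℝ :=
  gBlock d (sigmaMat d b) (rhoMap d h)

namespace St15

variable {d : ℕ} [NeZero d]

lemma sigma_eq (b : Fin d → ℝ) :
    sigmaMat d b = (1/2 : ℝ) •
      (vecMulVec b (Pi.single 0 1) + vecMulVec (Pi.single (0 : Fin d) (1 : ℝ)) b) := by
  ext i j
  simp only [sigmaMat, Matrix.of_apply, Matrix.smul_apply, Matrix.add_apply,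
    Matrix.vecMulVec_apply, Pi.single_apply, smul_eq_mul]
  rcases eq_or_ne i 0 with hi | hi <;> rcases eq_or_ne j 0 with hj | hj <;>
    simp [hi, hj] <;> ring

lemma sigma_transpose (b : Fin d → ℝ) : (sigmaMat d b)ᵀ = sigmaMat d b := by
  ext i j
  simp only [Matrix.transpose_apply, sigmaMat, Matrix.of_apply]
  rcases eq_or_ne i 0 with hi | hi <;> rcases eq_or_ne j 0 with hj | hj <;>
    simp [hi, hj]

lemma sigma_add (b₁ b₂ : Fin d → ℝ) :
    sigmaMat d (b₁ + b₂) = sigmaMat d b₁ + sigmaMat d b₂ := by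
  ext i j
  simp only [sigmaMat, Matrix.of_apply, Matrix.add_apply, Pi.add_apply]
  split_ifs <;> ring

lemma hmul_vmv (h : Matrix (Fin d) (Fin d) ℝ) (u v : Fin d → ℝ) :
    h * vecMulVec u v = vecMulVec (h.mulVec u) v := by
  ext i j
  simp only [Matrix.mul_apply, Matrix.vecMulVec_apply, Matrix.mulVec, dotProduct,
    Finset.sum_mul]
  exact Finset.sum_congr rfl fun k _ => by ring

lemma vmv_mul_ht (h : Matrix (Fin d) (Fin d) ℝ) (u v : Fin d → ℝ) :
    vecMulVec u v * hᵀ = vecMulVec u (h.mulVec v) := by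
  ext i j
  simp only [Matrix.mul_apply, Matrix.vecMulVec_apply, Matrix.mulVec, dotProduct,
    Matrix.transpose_apply, Finset.mul_sum]
  exact Finset.sum_congr rfl fun k _ => by ring

lemma vmv_smul_left (c : ℝ) (u v : Fin d → ℝ) :
    vecMulVec (c • u) v = c • vecMulVec u v := by
  ext i j
  simp [Matrix.vecMulVec_apply, mul_assoc]

lemma vmv_smul_right (c : ℝ) (u v : Fin d → ℝ) :
    vecMulVec u (c • v) = c • vecMulVec u v := by
  ext i j
  simp [Matrix.vecMulVec_apply]
  ring

lemma vmv_single_right (c : ℝ) (u : Fin d → ℝ) :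
    vecMulVec u (Pi.single 0 c) = c • vecMulVec u (Pi.single (0 : Fin d) (1 : ℝ)) := by
  ext i j
  simp only [Matrix.vecMulVec_apply, Pi.single_apply, Matrix.smul_apply, smul_eq_mul]
  split_ifs <;> ring

lemma vmv_single_left (c : ℝ) (u : Fin d → ℝ) :
    vecMulVec (Pi.single 0 c) u = c • vecMulVec (Pi.single (0 : Fin d) (1 : ℝ)) u := by
  ext i j
  simp only [Matrix.vecMulVec_apply, Pi.single_apply, Matrix.smul_apply, smul_eq_mul]
  split_ifs <;> ring

lemma sigma_conj (h : Matrix (Fin d) (Fin d) ℝ)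
    (htri : ∀ i j : Fin d, j < i → h i j = 0) (b : Fin d → ℝ) :
    h * sigmaMat d b * hᵀ = (h 0 0) • sigmaMat d (h.mulVec b) := by
  have he : h.mulVec (Pi.single 0 1) = Pi.single 0 (h 0 0) := by
    funext i
    rcases eq_or_ne i 0 with hi | hi
    · subst hi; simp
    · have hlt : (0 : Fin d) < i := lt_of_le_of_ne (Fin.zero_le i) (Ne.symm hi)
      simp [hi, htri i 0 hlt]
  rw [sigma_eq b, sigma_eq (h.mulVec b), mul_smul_comm, smul_mul_assoc, mul_add, add_mul,
    hmul_vmv, hmul_vmv, vmv_mul_ht, vmv_mul_ht, he, vmv_single_left, vmv_single_right]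
  module



lemma rho_right_inv (h : Matrix (Fin d) (Fin d) ℝ) (hu : IsUnit h) (hpos : 0 < h 0 0) :
    rhoMap d h * ((Real.sqrt (h 0 0))⁻¹ • hᵀ) = 1 := by
  have hdet : IsUnit h.det := (Matrix.isUnit_iff_isUnit_det h).mp hu
  unfold rhoMap
  rw [smul_mul_assoc, mul_smul_comm, smul_smul, ← Matrix.transpose_mul,
    Matrix.mul_nonsing_inv _ hdet, Matrix.transpose_one,
    mul_inv_cancel₀ (ne_of_gt (Real.sqrt_pos.mpr hpos)), one_smul]

lemma rho_det_isUnit (h : Matrix (Fin d) (Fin d) ℝ) (hu : IsUnit h) (hpos : 0 < h 0 0) :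
    IsUnit (rhoMap d h).det :=
  Matrix.isUnit_det_of_right_inverse (rho_right_inv h hu hpos)

lemma rho_inv (h : Matrix (Fin d) (Fin d) ℝ) (hu : IsUnit h) (hpos : 0 < h 0 0) :
    (rhoMap d h)⁻¹ = (Real.sqrt (h 0 0))⁻¹ • hᵀ :=
  Matrix.inv_eq_right_inv (rho_right_inv h hu hpos)

lemma rho_inv_transpose (h : Matrix (Fin d) (Fin d) ℝ) (hu : IsUnit h) (hpos : 0 < h 0 0) :
    ((rhoMap d h)⁻¹)ᵀ = (Real.sqrt (h 0 0))⁻¹ • h := by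
  rw [rho_inv h hu hpos, Matrix.transpose_smul, Matrix.transpose_transpose]

lemma mul_zero_zero (h₁ h₂ : Matrix (Fin d) (Fin d) ℝ)
    (ht₂ : ∀ i j : Fin d, j < i → h₂ i j = 0) :
    (h₁ * h₂) 0 0 = h₁ 0 0 * h₂ 0 0 := by
  rw [Matrix.mul_apply]
  rw [Finset.sum_eq_single 0]
  · intro k _ hk
    have hlt : (0 : Fin d) < k := lt_of_le_of_ne (Fin.zero_le k) (Ne.symm hk)
    rw [ht₂ k 0 hlt, mul_zero]
  · intro hmem; exact absurd (Finset.mem_univ 0) hmem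

lemma rho_mul (h₁ h₂ : Matrix (Fin d) (Fin d) ℝ)
    (hp₁ : 0 < h₁ 0 0) (ht₂ : ∀ i j : Fin d, j < i → h₂ i j = 0) :
    rhoMap d (h₁ * h₂) = rhoMap d h₁ * rhoMap d h₂ := by
  unfold rhoMap
  rw [mul_zero_zero h₁ h₂ ht₂, Real.sqrt_mul hp₁.le, Matrix.mul_inv_rev, Matrix.transpose_mul,
    smul_mul_assoc, mul_smul_comm, smul_smul]

lemma sigma_mulVec (h : Matrix (Fin d) (Fin d) ℝ) (hu : IsUnit h) (hpos : 0 < h 0 0)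
    (htri : ∀ i j : Fin d, j < i → h i j = 0) (b : Fin d → ℝ) :
    sigmaMat d (h.mulVec b) * rhoMap d h = ((rhoMap d h)⁻¹)ᵀ * sigmaMat d b := by
  have hdet : IsUnit h.det := (Matrix.isUnit_iff_isUnit_det h).mp hu
  have hdetT : IsUnit hᵀ.det := by rwa [Matrix.det_transpose]
  have hs : Real.sqrt (h 0 0) ≠ 0 := ne_of_gt (Real.sqrt_pos.mpr hpos)
  have hss : Real.sqrt (h 0 0) * Real.sqrt (h 0 0) = h 0 0 := Real.mul_self_sqrt hpos.le
  have hkey : sigmaMat d (h.mulVec b) = (h 0 0)⁻¹ • (h * sigmaMat d b * hᵀ) := by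
    rw [sigma_conj h htri b, smul_smul, inv_mul_cancel₀ (ne_of_gt hpos), one_smul]
  rw [rho_inv_transpose h hu hpos, hkey]
  unfold rhoMap
  rw [smul_mul_assoc, mul_smul_comm, smul_smul, smul_mul_assoc]
  rw [Matrix.mul_assoc (h * sigmaMat d b), Matrix.transpose_nonsing_inv,
    Matrix.mul_nonsing_inv _ hdetT, Matrix.mul_one]
  congr 1
  rw [← hss]; field_simp
  rw [Real.sqrt_sq (Real.sqrt_nonneg _)]
end St15

/-- Let `H` be a subgroup of `T(d,ℝ)_+` and `G = ℝ^d ⋊ H` with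
multiplication `(b₁,h₁)(b₂,h₂) = (b₁ + h₁b₂, h₁h₂)`.  Then `φ(b,h) = g(σ_b, ρ(h))` is an
injective group homomorphism of `G` into `Sp(d,ℝ)`; in particular `G` is isomorphic to
the subgroup `{g(σ_b, ρ(h)) : b ∈ ℝ^d, h ∈ H}` of `Sp(d,ℝ)`. -/


theorem statement15 (d : ℕ) [NeZero d]
    (H : Set (Matrix (Fin d) (Fin d) ℝ))
    (hHsub : H ⊆ Tplus d)
    (hHone : (1 : Matrix (Fin d) (Fin d) ℝ) ∈ H)
    (hHmul : ∀ h₁ ∈ H, ∀ h₂ ∈ H, h₁ * h₂ ∈ H)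
    (hHinv : ∀ h ∈ H, h⁻¹ ∈ H) :
    (∀ (b₁ b₂ : Fin d → ℝ), ∀ h₁ ∈ H, ∀ h₂ ∈ H,
      phiMap d (b₁ + h₁.mulVec b₂) (h₁ * h₂) = phiMap d b₁ h₁ * phiMap d b₂ h₂) ∧
    (∀ (b b' : Fin d → ℝ), ∀ h ∈ H, ∀ h' ∈ H,
      phiMap d b h = phiMap d b' h' → b = b' ∧ h = h') ∧
    (∀ (b : Fin d → ℝ), ∀ h ∈ H,
      (phiMap d b h)ᵀ * Jmat d * phiMap d b h = Jmat d) := by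
  refine ⟨?_, ?_, ?_⟩
  · -- homomorphism
    intro b₁ b₂ h₁ hh₁ h₂ hh₂
    obtain ⟨hu₁, hp₁, ht₁⟩ := hHsub hh₁
    obtain ⟨hu₂, hp₂, ht₂⟩ := hHsub hh₂
    unfold phiMap gBlock
    rw [Matrix.fromBlocks_multiply]
    simp only [Matrix.mul_zero, Matrix.zero_mul, add_zero, zero_add]
    have hρ := St15.rho_mul h₁ h₂ hp₁ ht₂
    have hD : ((rhoMap d (h₁ * h₂))⁻¹)ᵀ = ((rhoMap d h₁)⁻¹)ᵀ * ((rhoMap d h₂)⁻¹)ᵀ := by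
      rw [hρ, Matrix.mul_inv_rev, Matrix.transpose_mul]
    have hC : sigmaMat d (b₁ + h₁.mulVec b₂) * rhoMap d (h₁ * h₂)
        = sigmaMat d b₁ * rhoMap d h₁ * rhoMap d h₂
          + ((rhoMap d h₁)⁻¹)ᵀ * (sigmaMat d b₂ * rhoMap d h₂) := by
      rw [hρ, St15.sigma_add, add_mul, ← Matrix.mul_assoc, ← Matrix.mul_assoc,
        St15.sigma_mulVec h₁ hu₁ hp₁ ht₁ b₂, Matrix.mul_assoc (((rhoMap d h₁)⁻¹)ᵀ)]
    rw [hD, hC, hρ]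
  · -- injectivity
    intro b b' h hh h' hh' heq
    obtain ⟨hu, hp, ht⟩ := hHsub hh
    obtain ⟨hu', hp', ht'⟩ := hHsub hh'
    have h22 := congrArg Matrix.toBlocks₂₂ heq
    have h21 := congrArg Matrix.toBlocks₂₁ heq
    simp only [phiMap, gBlock, Matrix.toBlocks_fromBlocks₂₂, Matrix.toBlocks_fromBlocks₂₁]
      at h22 h21
    rw [St15.rho_inv_transpose h hu hp, St15.rho_inv_transpose h' hu' hp'] at h22
    have hsne : Real.sqrt (h 0 0) ≠ 0 := ne_of_gt (Real.sqrt_pos.mpr hp)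
    have hsne' : Real.sqrt (h' 0 0) ≠ 0 := ne_of_gt (Real.sqrt_pos.mpr hp')
    have hs : Real.sqrt (h 0 0) = Real.sqrt (h' 0 0) := by
      have e00 := congrFun (congrFun h22 0) 0
      simp only [Matrix.smul_apply, smul_eq_mul] at e00
      have l1 : (Real.sqrt (h 0 0))⁻¹ * h 0 0 = Real.sqrt (h 0 0) := by
        calc (Real.sqrt (h 0 0))⁻¹ * h 0 0
            = (Real.sqrt (h 0 0))⁻¹ * (Real.sqrt (h 0 0) * Real.sqrt (h 0 0)) := by
              rw [Real.mul_self_sqrt hp.le]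
          _ = Real.sqrt (h 0 0) := inv_mul_cancel_left₀ hsne _
      have l2 : (Real.sqrt (h' 0 0))⁻¹ * h' 0 0 = Real.sqrt (h' 0 0) := by
        calc (Real.sqrt (h' 0 0))⁻¹ * h' 0 0
            = (Real.sqrt (h' 0 0))⁻¹ * (Real.sqrt (h' 0 0) * Real.sqrt (h' 0 0)) := by
              rw [Real.mul_self_sqrt hp'.le]
          _ = Real.sqrt (h' 0 0) := inv_mul_cancel_left₀ hsne' _
      rw [l1, l2] at e00
      exact e00
    have hE : h = h' := by
      rw [← hs] at h22
      exact smul_right_injective _ (inv_ne_zero hsne) h22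
    refine ⟨?_, hE⟩
    rw [← hE] at h21
    have hσ : sigmaMat d b = sigmaMat d b' := by
      have hdet := St15.rho_det_isUnit h hu hp
      have hmul := congrArg (fun M => M * (rhoMap d h)⁻¹) h21
      simpa [Matrix.mul_assoc, Matrix.mul_nonsing_inv _ hdet] using hmul
    funext i
    rcases eq_or_ne i 0 with hi | hi
    · subst hi
      have := congrFun (congrFun hσ 0) 0
      simpa [sigmaMat] using this
    · have := congrFun (congrFun hσ 0) i
      simp [sigmaMat, hi] at this
      linarith
  · -- symplectic
    intro b h hh
    obtain ⟨hu, hp, ht⟩ := hHsub hh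
    have hdet := St15.rho_det_isUnit h hu hp
    set A := rhoMap d h with hA
    unfold phiMap gBlock Jmat
    rw [Matrix.fromBlocks_transpose, Matrix.fromBlocks_multiply, Matrix.fromBlocks_multiply]
    have h1 : Aᵀ * (A⁻¹)ᵀ = 1 := by
      rw [← Matrix.transpose_mul, Matrix.nonsing_inv_mul _ hdet, Matrix.transpose_one]
    have h2 : A⁻¹ * A = 1 := Matrix.nonsing_inv_mul _ hdet
    have h3 : (sigmaMat d b * A)ᵀ * A = Aᵀ * (sigmaMat d b * A) := by
      rw [Matrix.transpose_mul, St15.sigma_transpose, Matrix.mul_assoc]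
    simp only [Matrix.transpose_zero, Matrix.transpose_transpose, Matrix.mul_zero,
      Matrix.zero_mul, add_zero, zero_add, mul_one, mul_neg, neg_mul, Matrix.mul_one,
      Matrix.one_mul, Matrix.neg_mul, Matrix.mul_neg]
    rw [h1, h2, h3]
    simp
    exact neg_add_cancel _

end
end

section
/- Fix h ∈ T(d,ℝ)_+ and b ∈ ℝ^d. For functions f : ℝ^d → ℂ define, for ξ ∈ ℝ^d with ξ_1 < 0: (Ψf)(ξ) = 2^{(d−2)/4} |ξ_1|^{−d/4} · f(√2 ξ / √(−ξ_1)); (Φf)(ξ) = 2^{(1−d)/2} |ξ_1|^{d/2} · f(−(1/2) ξ_1 ξ); and (μ_{b,h} f)(ξ) = |det ρ(h)|^{−1/2} e^{iπ⟨σ_b ξ, ξ⟩} f(ρ(h)^{−1} ξ). Then for every f : ℝ^d → ℂ and every ξ ∈ ℝ^d with ξ_1 < 0, the intertwining identity (Ψ(μ_{b,h}(Φ f)))(ξ) = |det h|^{1/2} e^{−2πi⟨b,ξ⟩} f(h^T ξ) holds; that is, conjugation by Ψ carries the restricted metaplectic action μ_{b,h} into the Fourier side of the quasi-regular representation. -/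
open Matrix

noncomputable section

/-- The standard inner product on `ℝ^d`. -/
def dotProd (d : ℕ) (x y : Fin d → ℝ) : ℝ := ∑ i, x i * y i

/-- `(Ψf)(ξ) = 2^{(d-2)/4} |ξ_1|^{-d/4} · f(√2·ξ/√(-ξ_1))`. -/
def PsiOp (d : ℕ) [NeZero d] (f : (Fin d → ℝ) → ℂ) (ξ : Fin d → ℝ) : ℂ :=
  (((2 : ℝ) ^ (((d : ℝ) - 2) / 4) * |ξ 0| ^ (-(d : ℝ) / 4) : ℝ) : ℂ) *
    f ((Real.sqrt 2 / Real.sqrt (-ξ 0)) • ξ)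

/-- `(Φf)(ξ) = 2^{(1-d)/2} |ξ_1|^{d/2} · f(-(1/2)·ξ_1·ξ)`. -/
def PhiOp (d : ℕ) [NeZero d] (f : (Fin d → ℝ) → ℂ) (ξ : Fin d → ℝ) : ℂ :=
  (((2 : ℝ) ^ ((1 - (d : ℝ)) / 2) * |ξ 0| ^ ((d : ℝ) / 2) : ℝ) : ℂ) *
    f ((-(1 / 2) * ξ 0) • ξ)

/-- `(μ_{b,h}f)(ξ) = |det ρ(h)|^{-1/2} e^{iπ⟨σ_b ξ, ξ⟩} f(ρ(h)⁻¹ ξ)`. -/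
def muOp (d : ℕ) [NeZero d] (b : Fin d → ℝ) (h : Matrix (Fin d) (Fin d) ℝ)
    (f : (Fin d → ℝ) → ℂ) (ξ : Fin d → ℝ) : ℂ :=
  ((|((rhoMap d h).det)| ^ (-(1 : ℝ) / 2) : ℝ) : ℂ) *
    Complex.exp (((Real.pi * dotProd d ((sigmaMat d b).mulVec ξ) ξ : ℝ) : ℂ) * Complex.I) *
    f ((rhoMap d h)⁻¹.mulVec ξ)

lemma sigma_quad (d : ℕ) [NeZero d] (b η : Fin d → ℝ) :
    dotProd d ((sigmaMat d b).mulVec η) η = η 0 * dotProd d b η := by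
  have key : ∀ i j : Fin d, sigmaMat d b i j =
      (if i = 0 then b j / 2 else 0) + (if j = 0 then b i / 2 else 0) := by
    intro i j
    by_cases hi : i = 0 <;> by_cases hj : j = 0 <;> simp [sigmaMat, hi, hj]
  simp only [dotProd, Matrix.mulVec, dotProduct, key, add_mul, Finset.sum_add_distrib,
    ite_mul, zero_mul, Finset.sum_ite_irrel, Finset.sum_const_zero, Finset.sum_ite_eq',
    Finset.mem_univ, if_true]
  rw [Finset.sum_mul, Finset.mul_sum, ← Finset.sum_add_distrib]
  exact Finset.sum_congr rfl fun i _ => by ring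

lemma const_eq (dd : ℕ) (t s D : ℝ) (ht : 0 < t) (hs : 0 < s) (hD : 0 < D) :
    (2:ℝ) ^ (((dd:ℝ) - 2) / 4) * t ^ (-(dd:ℝ) / 4) *
      ((s ^ dd / D) ^ (-(1:ℝ) / 2) *
        ((2:ℝ) ^ ((1 - (dd:ℝ)) / 2) * (Real.sqrt 2 * s * Real.sqrt t) ^ ((dd:ℝ) / 2))) =
    D ^ ((1:ℝ) / 2) := by
  have h2 : (0:ℝ) < 2 := two_pos
  have hsd : (0:ℝ) < s ^ dd / D := by positivity
  have hX : (0:ℝ) < Real.sqrt 2 * s * Real.sqrt t := by positivity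
  apply Real.log_injOn_pos (Set.mem_Ioi.mpr (by positivity)) (Set.mem_Ioi.mpr (by positivity))
  rw [Real.log_rpow hD,
    Real.log_mul (by positivity) (by positivity),
    Real.log_mul (by positivity) (by positivity),
    Real.log_mul (by positivity) (by positivity),
    Real.log_mul (by positivity) (by positivity),
    Real.log_rpow h2, Real.log_rpow ht, Real.log_rpow hsd, Real.log_rpow h2, Real.log_rpow hX,
    Real.log_div (by positivity) hD.ne', Real.log_pow,
    Real.log_mul (by positivity) (by positivity),
    Real.log_mul (by positivity) (by positivity),
    Real.log_sqrt h2.le, Real.log_sqrt ht.le]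
  ring

/-- For `h ∈ T(d,ℝ)_+` and `b ∈ ℝ^d`, the intertwining identity
`(Ψ(μ_{b,h}(Φf)))(ξ) = |det h|^{1/2} e^{-2πi⟨b,ξ⟩} f(hᵀξ)` holds for every
`f : ℝ^d → ℂ` and every `ξ` with `ξ_1 < 0`. -/
theorem statement17 (d : ℕ) [NeZero d]
    (h : Matrix (Fin d) (Fin d) ℝ) (hh : h ∈ Tplus d) (b : Fin d → ℝ) :
    ∀ (f : (Fin d → ℝ) → ℂ) (ξ : Fin d → ℝ), ξ 0 < 0 →
      PsiOp d (muOp d b h (PhiOp d f)) ξ =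
        ((|h.det| ^ ((1 : ℝ) / 2) : ℝ) : ℂ) *
          Complex.exp (((-2 * Real.pi * dotProd d b ξ : ℝ) : ℂ) * Complex.I) *
          f (hᵀ.mulVec ξ) := by

  obtain ⟨hu, h00pos, htri⟩ := hh
  intro f ξ hξ
  set s := Real.sqrt (h 0 0) with hsdef
  have hs : 0 < s := Real.sqrt_pos.mpr h00pos
  have hr : 0 < Real.sqrt (-ξ 0) := Real.sqrt_pos.mpr (by linarith)
  have hs2 : s * s = h 0 0 := Real.mul_self_sqrt h00pos.le
  have hr2 : Real.sqrt (-ξ 0) * Real.sqrt (-ξ 0) = -ξ 0 := Real.mul_self_sqrt (by linarith)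
  have h22 : Real.sqrt 2 * Real.sqrt 2 = 2 := Real.mul_self_sqrt (by norm_num)
  have hdet : IsUnit h.det := (Matrix.isUnit_iff_isUnit_det h).mp hu
  have hdetne : h.det ≠ 0 := hdet.ne_zero
  have htop0 : hᵀ.mulVec ξ 0 = h 0 0 * ξ 0 := by
    simp only [Matrix.mulVec, dotProduct, Matrix.transpose_apply]
    rw [Finset.sum_eq_single 0]
    · exact fun j _ hj => by
        rw [htri j 0 (lt_of_le_of_ne (Fin.zero_le j) (Ne.symm hj)), zero_mul]
    · exact fun habs => absurd (Finset.mem_univ 0) habs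
  have hinv : (rhoMap d h)⁻¹ = s⁻¹ • hᵀ := by
    apply Matrix.inv_eq_right_inv
    rw [rhoMap, ← hsdef, Matrix.smul_mul, Matrix.mul_smul, smul_smul,
      mul_inv_cancel₀ hs.ne', ← Matrix.transpose_mul, Matrix.mul_nonsing_inv h hdet,
      Matrix.transpose_one, one_smul]
  have hzeta : (rhoMap d h)⁻¹.mulVec ((Real.sqrt 2 / Real.sqrt (-ξ 0)) • ξ) =
      (s⁻¹ * (Real.sqrt 2 / Real.sqrt (-ξ 0))) • hᵀ.mulVec ξ := by
    rw [hinv, Matrix.smul_mulVec, Matrix.mulVec_smul, smul_smul]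
  have hdetrho : |(rhoMap d h).det| = s ^ d / |h.det| := by
    rw [rhoMap, ← hsdef, Matrix.det_smul, Matrix.det_transpose, Matrix.det_nonsing_inv,
      Ring.inverse_eq_inv', abs_mul, abs_pow, abs_of_pos hs, abs_inv, Fintype.card_fin,
      div_eq_mul_inv]
  have hcoef : -(1 / 2 : ℝ) * (s⁻¹ * (Real.sqrt 2 / Real.sqrt (-ξ 0)) * (h 0 0 * ξ 0)) *
      (s⁻¹ * (Real.sqrt 2 / Real.sqrt (-ξ 0))) = 1 := by
    field_simp
    linear_combination (-(h 0 0 * ξ 0)) * h22 -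
      2 * (Real.sqrt (-ξ 0) * Real.sqrt (-ξ 0)) * hs2 - 2 * (h 0 0) * hr2
  have hzeta0 : s⁻¹ * (Real.sqrt 2 / Real.sqrt (-ξ 0)) * (h 0 0 * ξ 0) =
      -(Real.sqrt 2 * s * Real.sqrt (-ξ 0)) := by
    have hx0 : ξ 0 = -(Real.sqrt (-ξ 0) * Real.sqrt (-ξ 0)) := by linarith
    rw [← hs2]
    generalize Real.sqrt (-ξ 0) = r at hr hx0 ⊢
    rw [hx0]
    have eu : s⁻¹ * s = 1 := inv_mul_cancel₀ hs.ne'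
    have ev : r⁻¹ * r = 1 := inv_mul_cancel₀ hr.ne'
    linear_combination (-Real.sqrt 2 * s * r * (s⁻¹ * s)) * ev + (-Real.sqrt 2 * s * r) * eu
  have hdot : dotProd d b ((Real.sqrt 2 / Real.sqrt (-ξ 0)) • ξ) =
      (Real.sqrt 2 / Real.sqrt (-ξ 0)) * dotProd d b ξ := by
    simp only [dotProd, Pi.smul_apply, smul_eq_mul, Finset.mul_sum]
    exact Finset.sum_congr rfl fun i _ => by ring
  have hphase : Real.pi * dotProd d
        ((sigmaMat d b).mulVec ((Real.sqrt 2 / Real.sqrt (-ξ 0)) • ξ))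
        ((Real.sqrt 2 / Real.sqrt (-ξ 0)) • ξ) = -2 * Real.pi * dotProd d b ξ := by
    rw [sigma_quad, hdot, Pi.smul_apply, smul_eq_mul]
    have hx0 : ξ 0 = -(Real.sqrt (-ξ 0) * Real.sqrt (-ξ 0)) := by linarith
    generalize Real.sqrt (-ξ 0) = r at hr hx0 ⊢
    rw [hx0]
    have e1 : r⁻¹ * r = 1 := inv_mul_cancel₀ hr.ne'
    linear_combination (-Real.pi * dotProd d b ξ * Real.sqrt 2 * Real.sqrt 2 * (r⁻¹ * r + 1)) * e1 +
      (-Real.pi * dotProd d b ξ) * h22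
  simp only [PsiOp, muOp, PhiOp]
  rw [hzeta]
  simp only [Pi.smul_apply, smul_eq_mul]
  have hXpos : (0:ℝ) < Real.sqrt 2 * s * Real.sqrt (-ξ 0) := by positivity
  rw [htop0, smul_smul, hcoef, one_smul, hzeta0, abs_neg, abs_of_pos hXpos,
    abs_of_neg hξ, hphase, hdetrho,
    ← const_eq d (-ξ 0) s |h.det| (by linarith) hs (abs_pos.mpr hdetne)]
  push_cast
  ring

end
end
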